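/- arXiv:1301.5278 — 2 statements merged into one kernel-verified Lean document; each statement's English description precedes it below -/
import Mathlib

section
/- Let (R,m) be a Noetherian local ring of Krull dimension d satisfying (R1'), i.e. R_p is a field for every prime p with dim R/p = d and a discrete valuation ring for every prime p with dim R/p = d−1. Then every prime ideal p of R with dim R/p = d−1 contains exactly one minimal prime ideal q of R, and this q satisfies dim R/q = d. -/
open Order

section generic

variable {α : Type*} [PartialOrder α]

lemma my_krullDim_Ici (a : α) :
    Order.krullDim (Set.Ici a) = (Order.coheight a : WithBot ℕ∞) := by
  have : Nonempty (Set.Ici a) := ⟨⟨a, le_rfl⟩⟩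
  rw [Order.krullDim_eq_iSup_length]
  rw [WithBot.coe_inj]
  apply le_antisymm
  · apply iSup_le
    intro p
    have hhead : a ≤ (p.map Subtype.val (fun _ _ h => h)).head := p.head.2
    exact Order.length_le_coheight hhead
  · apply Order.coheight_le
    intro p hp
    let q : LTSeries (Set.Ici a) :=
      ⟨p.length, fun i => ⟨p i, hp ▸ (p.monotone (Fin.zero_le i) : p.head ≤ p i)⟩,
        fun i => by exact p.step i⟩
    have : q.length = p.length := rfl
    exact this ▸ le_iSup (fun (r : LTSeries (Set.Ici a)) => (r.length : ℕ∞)) q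

end generic

section quot

variable {R : Type*} [CommRing R]

noncomputable def myPrimeSpectrumQuotOrderIso (I : Ideal R) [hI : I.IsPrime] :
    PrimeSpectrum (R ⧸ I) ≃o Set.Ici (⟨I, hI⟩ : PrimeSpectrum R) where
  toFun p := ⟨⟨p.asIdeal.comap (Ideal.Quotient.mk I), Ideal.IsPrime.comap _⟩, by
    show I ≤ _
    conv_lhs => rw [← Ideal.mk_ker (I := I)]
    exact Ideal.ker_le_comap _⟩
  invFun p := ⟨p.1.asIdeal.map (Ideal.Quotient.mk I),
    Ideal.map_isPrime_of_surjective Ideal.Quotient.mk_surjective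
      (by rw [Ideal.mk_ker]; exact p.2)⟩
  left_inv p := by
    ext1
    exact Ideal.map_comap_of_surjective _ Ideal.Quotient.mk_surjective _
  right_inv p := by
    apply Subtype.ext
    apply PrimeSpectrum.ext
    dsimp
    rw [Ideal.comap_map_of_surjective _ Ideal.Quotient.mk_surjective, ← RingHom.ker_eq_comap_bot, Ideal.mk_ker,
      sup_eq_left.mpr p.2]
  map_rel_iff' {p q} := by
    constructor
    · intro h
      rw [← PrimeSpectrum.asIdeal_le_asIdeal]
      exact (Ideal.comap_le_comap_iff_of_surjective _ Ideal.Quotient.mk_surjective _ _).mp h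
    · intro h
      show (_ : PrimeSpectrum R) ≤ _
      rw [← PrimeSpectrum.asIdeal_le_asIdeal]
      exact Ideal.comap_mono h

lemma my_ringKrullDim_quotient_prime (I : Ideal R) [hI : I.IsPrime] :
    ringKrullDim (R ⧸ I) = (Order.coheight (⟨I, hI⟩ : PrimeSpectrum R) : WithBot ℕ∞) := by
  rw [← my_krullDim_Ici]
  exact Order.krullDim_eq_of_orderIso (myPrimeSpectrumQuotOrderIso I)

end quot



/-- `R` satisfies (R1′) (is *regular in codimension one*): the localization `R_P` is a field
for every prime `P` with `dim R/P = d`, and a discrete valuation ring for every prime `P`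
with `dim R/P = d - 1`. -/
def RegularInCodimOne (R : Type*) [CommRing R] (d : ℕ) : Prop :=
  (∀ (P : Ideal R) [P.IsPrime], ringKrullDim (R ⧸ P) = (d : ℕ) →
    IsField (Localization.AtPrime P)) ∧
  (∀ (P : Ideal R) [P.IsPrime], ringKrullDim (R ⧸ P) = ((d - 1 : ℕ) : ℕ) →
    ∃ h : IsDomain (Localization.AtPrime P),
      @IsDiscreteValuationRing (Localization.AtPrime P) _ h)

/-- Let `(R, m)` be a Noetherian local ring of Krull dimension `d`
satisfying (R1′).  Then every prime `P` with `dim R/P = d - 1` contains exactly one minimal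
prime `q` of `R`, and this `q` satisfies `dim R/q = d`. -/
theorem unique_minimal_prime_below_codim_one
    {R : Type} [CommRing R] [IsNoetherianRing R] [IsLocalRing R]
    (d : ℕ) (hd : ringKrullDim R = (d : ℕ)) (hR1 : RegularInCodimOne R d)
    (P : Ideal R) (hP : P.IsPrime)
    (hPd : ringKrullDim (R ⧸ P) = ((d - 1 : ℕ) : ℕ)) :
    ∃ q ∈ minimalPrimes R, q ≤ P ∧ ringKrullDim (R ⧸ q) = (d : ℕ) ∧
      ∀ q' ∈ minimalPrimes R, q' ≤ P → q' = q := by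
  obtain ⟨hR1a, hR1b⟩ := hR1
  haveI := hP
  obtain ⟨hdom, hdvr⟩ := hR1b P hPd
  haveI := hdom
  haveI := hdvr
  -- d ≥ 1
  rcases Nat.eq_zero_or_pos d with rfl | hd1
  · exfalso
    have hfield := hR1a P (by simpa using hPd)
    exact IsDiscreteValuationRing.not_a_field (Localization.AtPrime P)
      (IsLocalRing.isField_iff_maximalIdeal_eq.mp hfield)
  set L := Localization.AtPrime P with hL
  set q : Ideal R := RingHom.ker (algebraMap R L) with hq
  haveI hqprime : q.IsPrime := RingHom.ker_isPrime _
  have key : ∀ (p' : Ideal R), p'.IsPrime → p' ≤ P → q ≤ p' := by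
    intro p' hp' hle x hx
    rw [hq, RingHom.mem_ker] at hx
    obtain ⟨⟨s, hs⟩, hsx⟩ := (IsLocalization.map_eq_zero_iff P.primeCompl L x).mp hx
    have hmem : s * x ∈ p' := by
      have : s * x = 0 := hsx
      rw [this]; exact p'.zero_mem
    rcases hp'.mem_or_mem hmem with h | h
    · exact absurd (hle h) hs
    · exact h
  have hqP : q ≤ P := key P hP le_rfl
  have hqmin : q ∈ minimalPrimes R :=
    ⟨⟨hqprime, bot_le⟩, fun {J} hJ hJq => key J hJ.1 (hJq.trans hqP)⟩
  have hqneP : q ≠ P := by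
    intro h
    apply IsDiscreteValuationRing.not_a_field L
    rw [← Localization.AtPrime.map_eq_maximalIdeal]
    refine le_antisymm (Ideal.map_le_iff_le_comap.mpr ?_) bot_le
    rw [← RingHom.ker_eq_comap_bot, ← hq, ← h]
  have hba : (⟨q, hqprime⟩ : PrimeSpectrum R) < ⟨P, hP⟩ := lt_of_le_of_ne ((PrimeSpectrum.asIdeal_le_asIdeal _ _).mp hqP)
    (fun h => hqneP (congrArg PrimeSpectrum.asIdeal h))
  have hcoA : Order.coheight (⟨P, hP⟩ : PrimeSpectrum R) = ((d - 1 : ℕ) : ℕ∞) := by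
    have h1 := (my_ringKrullDim_quotient_prime P (hI := hP)).symm.trans hPd
    exact WithBot.coe_inj.mp h1
  have hcoB_le : Order.coheight (⟨q, hqprime⟩ : PrimeSpectrum R) ≤ (d : ℕ∞) := by
    have h1 : (Order.coheight (⟨q, hqprime⟩ : PrimeSpectrum R) : WithBot ℕ∞) ≤ ringKrullDim R := Order.coheight_le_krullDim (⟨q, hqprime⟩ : PrimeSpectrum R)
    rw [hd] at h1
    exact_mod_cast h1
  have hlt : Order.coheight (⟨P, hP⟩ : PrimeSpectrum R) < Order.coheight (⟨q, hqprime⟩ : PrimeSpectrum R) :=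
    Order.coheight_strictAnti hba (by rw [hcoA]; exact Ne.lt_top (by simp))
  have hcoB : Order.coheight (⟨q, hqprime⟩ : PrimeSpectrum R) = (d : ℕ∞) := by
    refine le_antisymm hcoB_le ?_
    rw [hcoA] at hlt
    have h2 : ((d - 1 : ℕ) : ℕ∞) + 1 ≤ Order.coheight (⟨q, hqprime⟩ : PrimeSpectrum R) :=
      (ENat.add_one_le_iff (by simp)).mpr hlt
    have h3 : ((d - 1 : ℕ) : ℕ∞) + 1 = (d : ℕ∞) := by
      have := Nat.succ_pred_eq_of_pos hd1
      exact_mod_cast congrArg (Nat.cast : ℕ → ℕ∞) this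
    rwa [h3] at h2
  have hdimq : ringKrullDim (R ⧸ q) = ((d : ℕ) : WithBot ℕ∞) := by
    rw [my_ringKrullDim_quotient_prime q (hI := hqprime)]
    exact WithBot.coe_inj.mpr hcoB
  refine ⟨q, hqmin, hqP, hdimq, fun q' hq' hle => ?_⟩
  exact le_antisymm (hq'.2 ⟨hqprime, bot_le⟩ (key q' hq'.1.1 hle)) (key q' hq'.1.1 hle)
end

section
/- Let (R,m) be a Noetherian local ring of Krull dimension d satisfying (R1'), and let q_1, …, q_u be the minimal prime ideals of R with dim R/q_i = d. Then for every prime ideal p of R with dim R/p ≥ d−1, the localization (q_1 ∩ … ∩ q_u)_p is zero; consequently the R-module q_1 ∩ … ∩ q_u has Krull dimension at most d−2. -/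
section Aux

variable {R : Type} [CommRing R]

/-- Arithmetic helper in `WithBot ℕ∞`. -/
lemma arith_helper {x : WithBot ℕ∞} {d : ℕ} (h1 : ((d - 1 : ℕ) : WithBot ℕ∞) ≤ x)
    (h2 : x ≤ ((d : ℕ) : WithBot ℕ∞)) (h3 : x ≠ ((d : ℕ) : WithBot ℕ∞)) :
    x = ((d - 1 : ℕ) : WithBot ℕ∞) := by
  generalize he : d - 1 = e at h1 ⊢
  have hb : x ≠ ⊥ := fun h => (not_le.mpr (by rw [h]; exact WithBot.bot_lt_coe _)) h1
  lift x to ℕ∞ using hb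
  have h2' : x ≤ (d : ℕ∞) := by exact_mod_cast h2
  have h1' : (e : ℕ∞) ≤ x := by exact_mod_cast h1
  have h3' : x ≠ (d : ℕ∞) := by
    intro h; exact h3 (by exact_mod_cast congrArg (fun n : ℕ∞ => (n : WithBot ℕ∞)) h)
  have ht : x ≠ ⊤ := ne_top_of_le_ne_top (by simp) h2'
  lift x to ℕ using ht
  have e2 : x ≤ d := by exact_mod_cast h2'
  have e1 : e ≤ x := by exact_mod_cast h1'
  have e3 : x ≠ d := fun h => h3' (by exact_mod_cast h)
  have hx : x = e := by omega
  subst hx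
  norm_cast

/-- The kernel of the localization map at a prime `P`, when the localization is a domain,
is a minimal prime contained in `P`, and it maps to zero. -/
lemma ker_localization_minimal (P : Ideal R) [hP : P.IsPrime]
    [IsDomain (Localization.AtPrime P)] :
    (RingHom.ker (algebraMap R (Localization.AtPrime P))).IsPrime ∧
    RingHom.ker (algebraMap R (Localization.AtPrime P)) ≤ P ∧
    RingHom.ker (algebraMap R (Localization.AtPrime P)) ∈ minimalPrimes R ∧
    (RingHom.ker (algebraMap R (Localization.AtPrime P))).map
      (algebraMap R (Localization.AtPrime P)) = ⊥ := by
  set f := algebraMap R (Localization.AtPrime P) with hf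
  have hprime : (RingHom.ker f).IsPrime := RingHom.ker_isPrime f
  have hle : RingHom.ker f ≤ P := by
    intro x hx
    rw [RingHom.mem_ker] at hx
    obtain ⟨⟨s, hs⟩, h⟩ := (IsLocalization.map_eq_zero_iff P.primeCompl _ x).mp hx
    have : s * x ∈ P := by
      simp only at h
      rw [h]
      exact P.zero_mem
    exact (hP.mem_or_mem this).resolve_left hs
  have hmap : (RingHom.ker f).map f = ⊥ := le_bot_iff.mp (by
    rw [RingHom.ker_eq_comap_bot]
    exact Ideal.map_comap_le)
  have hmin : RingHom.ker f ∈ minimalPrimes R := by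
    rw [minimalPrimes_eq_minimals]
    refine ⟨hprime, fun q hq hle' => ?_⟩
    have hd : Disjoint ((P.primeCompl : Submonoid R) : Set R) (q : Set R) :=
      Set.disjoint_left.mpr (fun y hy hyq => hy (hle (hle' hyq)))
    have hmapq : Ideal.map f q = ⊥ :=
      le_bot_iff.mp ((Ideal.map_mono hle').trans (le_of_eq hmap))
    have hcm := IsLocalization.comap_map_of_isPrime_disjoint P.primeCompl
      (Localization.AtPrime P) (I := q) hq hd
    rw [hmapq] at hcm
    have : RingHom.ker f = q := by rw [RingHom.ker_eq_comap_bot]; exact hcm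
    exact le_of_eq this
  exact ⟨hprime, hle, hmin, hmap⟩

/-- A minimal prime whose localization is a DVR gives a contradiction. -/
lemma no_minimal_dvr (P : Ideal R) [hP : P.IsPrime] (hmin : P ∈ minimalPrimes R)
    (hdom : IsDomain (Localization.AtPrime P))
    (hdvr : @IsDiscreteValuationRing (Localization.AtPrime P) _ hdom) : False := by
  obtain ⟨hprime, hle, _, hmap⟩ := ker_localization_minimal P
  rw [minimalPrimes_eq_minimals] at hmin
  have hPle : P ≤ RingHom.ker (algebraMap R (Localization.AtPrime P)) :=
    hmin.2 hprime hle
  have hPmap : Ideal.map (algebraMap R (Localization.AtPrime P)) P = ⊥ :=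
    le_bot_iff.mp ((Ideal.map_mono hPle).trans (le_of_eq hmap))
  rw [Localization.AtPrime.map_eq_maximalIdeal] at hPmap
  exact hdvr.not_a_field' hPmap

/-- `dim R/P ≤ dim R/Q` whenever `Q ≤ P`. -/
lemma dim_quot_le_dim_quot {Q P : Ideal R} (h : Q ≤ P) :
    ringKrullDim (R ⧸ P) ≤ ringKrullDim (R ⧸ Q) := by
  refine ringKrullDim_le_of_surjective (Ideal.Quotient.factor h) ?_
  intro y
  obtain ⟨x, rfl⟩ := Ideal.Quotient.mk_surjective y
  exact ⟨Ideal.Quotient.mk Q x, Ideal.Quotient.factor_mk h x⟩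

/-- If `dim (R/J) > c`, there is a prime `P ⊇ J` with `dim (R/P) ≥ c + 1`. -/
lemma exists_prime_of_krullDim_quotient (J : Ideal R) (c : ℕ)
    (h : ¬ ringKrullDim (R ⧸ J) ≤ ((c : ℕ) : WithBot ℕ∞)) :
    ∃ P : Ideal R, P.IsPrime ∧ J ≤ P ∧
      ((c + 1 : ℕ) : WithBot ℕ∞) ≤ ringKrullDim (R ⧸ P) := by
  unfold ringKrullDim Order.krullDim at h
  obtain ⟨p, hp⟩ := not_forall.mp (fun hall => h (iSup_le hall))
  replace hp : c + 1 ≤ p.length := by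
    have := not_le.mp hp
    exact_mod_cast Nat.add_one_le_iff.mpr (by exact_mod_cast this)
  let f : PrimeSpectrum (R ⧸ J) → PrimeSpectrum R :=
    fun x => ⟨x.asIdeal.comap (Ideal.Quotient.mk J), x.isPrime.comap _⟩
  have hf : StrictMono f := by
    intro a b hab
    rw [← PrimeSpectrum.asIdeal_lt_asIdeal]
    refine lt_of_le_of_ne (Ideal.comap_mono (le_of_lt hab)) (fun he => (ne_of_lt hab) ?_)
    exact PrimeSpectrum.ext
      (Ideal.comap_injective_of_surjective _ Ideal.Quotient.mk_surjective he)
  set P : Ideal R := (f p.head).asIdeal with hPdef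
  haveI : P.IsPrime := (f p.head).isPrime
  have hPle : ∀ i, P ≤ (f (p i)).asIdeal := fun i =>
    Ideal.comap_mono ((p.monotone (Fin.zero_le i)))
  have hkerP : RingHom.ker (Ideal.Quotient.mk P) = P := Ideal.mk_ker
  let g : Fin (p.length + 1) → PrimeSpectrum (R ⧸ P) := fun i =>
    ⟨Ideal.map (Ideal.Quotient.mk P) (f (p i)).asIdeal,
     Ideal.map_isPrime_of_surjective Ideal.Quotient.mk_surjective
       (hkerP.trans_le (hPle i))⟩
  have hg : StrictMono g := by
    intro i j hij
    rw [← PrimeSpectrum.asIdeal_lt_asIdeal]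
    have h1 : (f (p i)).asIdeal < (f (p j)).asIdeal := hf (p.strictMono hij)
    refine lt_of_le_of_ne (Ideal.map_mono (le_of_lt h1)) (fun he => (ne_of_lt h1) ?_)
    have ei := Ideal.comap_map_of_surjective (Ideal.Quotient.mk P)
      Ideal.Quotient.mk_surjective (f (p i)).asIdeal
    have ej := Ideal.comap_map_of_surjective (Ideal.Quotient.mk P)
      Ideal.Quotient.mk_surjective (f (p j)).asIdeal
    have hbot : Ideal.comap (Ideal.Quotient.mk P) (⊥ : Ideal (R ⧸ P)) = P := hkerP
    rw [hbot, sup_eq_left.mpr (hPle i)] at ei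
    rw [hbot, sup_eq_left.mpr (hPle j)] at ej
    rw [← ei, ← ej]
    exact congrArg (Ideal.comap (Ideal.Quotient.mk P)) he
  let chain : LTSeries (PrimeSpectrum (R ⧸ P)) := ⟨p.length, g, fun i => hg i.castSucc_lt_succ⟩
  refine ⟨P, (f p.head).isPrime, ?_, ?_⟩
  · intro x hx
    show Ideal.Quotient.mk J x ∈ (p.head).asIdeal
    rw [Ideal.Quotient.eq_zero_iff_mem.mpr hx]
    exact (p.head).asIdeal.zero_mem
  · calc ((c + 1 : ℕ) : WithBot ℕ∞) ≤ ((p.length : ℕ) : WithBot ℕ∞) := by exact_mod_cast hp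
      _ ≤ ringKrullDim (R ⧸ P) := Order.LTSeries.length_le_krullDim chain

end Aux

/-- Let `(R, m)` be a Noetherian local ring of Krull dimension `d`
satisfying (R1′), and let `q_1, …, q_u` be the minimal primes of `R` with `dim R/q_i = d`.
Then for every prime `P` with `dim R/P ≥ d - 1` the localization `(q_1 ∩ ⋯ ∩ q_u)_P` is
zero; consequently the module `q_1 ∩ ⋯ ∩ q_u` has Krull dimension at most `d - 2`. -/
theorem intersection_of_top_dim_minimal_primes_small
    {R : Type} [CommRing R] [IsNoetherianRing R] [IsLocalRing R]
    (d : ℕ) (hd : ringKrullDim R = (d : ℕ)) (hR1 : RegularInCodimOne R d)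
    (u : ℕ) (q : Fin u → Ideal R) (hinj : Function.Injective q)
    (hq : ∀ i, q i ∈ minimalPrimes R ∧ ringKrullDim (R ⧸ q i) = (d : ℕ))
    (hq' : ∀ Q ∈ minimalPrimes R, ringKrullDim (R ⧸ Q) = (d : ℕ) → ∃ i, q i = Q) :
    (∀ (P : Ideal R) [P.IsPrime], ((d - 1 : ℕ) : WithBot ℕ∞) ≤ ringKrullDim (R ⧸ P) →
      (⨅ i, q i).map (algebraMap R (Localization.AtPrime P)) = ⊥) ∧
    ringKrullDim (R ⧸ Module.annihilator R ↥(⨅ i, q i)) ≤ ((d - 2 : ℕ) : WithBot ℕ∞) := by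
  have part1 : ∀ (P : Ideal R) [P.IsPrime],
      ((d - 1 : ℕ) : WithBot ℕ∞) ≤ ringKrullDim (R ⧸ P) →
      (⨅ i, q i).map (algebraMap R (Localization.AtPrime P)) = ⊥ := by
    intro P hP hdim
    have hle : ringKrullDim (R ⧸ P) ≤ ((d : ℕ) : WithBot ℕ∞) :=
      hd ▸ ringKrullDim_quotient_le P
    by_cases hfield : ringKrullDim (R ⧸ P) = ((d : ℕ) : WithBot ℕ∞)
    · -- field case
      obtain ⟨Q, hQmin, hQP⟩ := Ideal.exists_minimalPrimes_le (bot_le : (⊥ : Ideal R) ≤ P)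
      have hQmin' : Q ∈ minimalPrimes R := hQmin
      have hQd : ringKrullDim (R ⧸ Q) = ((d : ℕ) : WithBot ℕ∞) :=
        le_antisymm (hd ▸ ringKrullDim_quotient_le Q) (hfield ▸ dim_quot_le_dim_quot hQP)
      obtain ⟨i, hi⟩ := hq' Q hQmin' hQd
      have hiP : (⨅ j, q j) ≤ P := le_trans (iInf_le q i) (hi ▸ hQP)
      have hfld := hR1.1 P hfield
      have hmax : IsLocalRing.maximalIdeal (Localization.AtPrime P) = ⊥ :=
        IsLocalRing.isField_iff_maximalIdeal_eq.mp hfld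
      refine le_bot_iff.mp ?_
      rw [← hmax, ← Localization.AtPrime.map_eq_maximalIdeal]
      exact Ideal.map_mono hiP
    · -- DVR case
      have hdm1 : ringKrullDim (R ⧸ P) = ((d - 1 : ℕ) : WithBot ℕ∞) :=
        arith_helper hdim hle hfield
      obtain ⟨hdom, hdvr⟩ := hR1.2 P hdm1
      haveI := hdom
      obtain ⟨hkprime, hkle, hkmin, hkmap⟩ := ker_localization_minimal P
      set Q := RingHom.ker (algebraMap R (Localization.AtPrime P)) with hQdef
      haveI : Q.IsPrime := hkprime
      have h1 : ringKrullDim (R ⧸ P) ≤ ringKrullDim (R ⧸ Q) := dim_quot_le_dim_quot hkle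
      have h2 : ringKrullDim (R ⧸ Q) ≤ ((d : ℕ) : WithBot ℕ∞) :=
        hd ▸ ringKrullDim_quotient_le Q
      by_cases hQd : ringKrullDim (R ⧸ Q) = ((d : ℕ) : WithBot ℕ∞)
      · obtain ⟨i, hi⟩ := hq' Q hkmin hQd
        have : (⨅ j, q j) ≤ Q := hi ▸ iInf_le q i
        exact le_bot_iff.mp ((Ideal.map_mono this).trans (le_of_eq hkmap))
      · have hQd1 : ringKrullDim (R ⧸ Q) = ((d - 1 : ℕ) : WithBot ℕ∞) :=
          arith_helper (hdm1 ▸ h1) h2 hQd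
        obtain ⟨hdomQ, hdvrQ⟩ := hR1.2 Q hQd1
        exact absurd (no_minimal_dvr Q hkmin hdomQ hdvrQ) not_false
  refine ⟨part1, ?_⟩
  by_contra hcon
  obtain ⟨P, hPprime, hPJ, hPdim⟩ := exists_prime_of_krullDim_quotient _ (d - 2) hcon
  haveI := hPprime
  have hdim' : ((d - 1 : ℕ) : WithBot ℕ∞) ≤ ringKrullDim (R ⧸ P) := by
    refine le_trans ?_ hPdim
    exact_mod_cast Nat.cast_le.mpr (by omega : d - 1 ≤ d - 2 + 1)
  have hmap := part1 P hdim'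
  have key : ∀ x ∈ (⨅ i, q i : Ideal R), ∃ t : P.primeCompl, (t : R) * x = 0 := by
    intro x hx
    refine (IsLocalization.map_eq_zero_iff P.primeCompl (Localization.AtPrime P) x).mp ?_
    have : algebraMap R (Localization.AtPrime P) x ∈
        Ideal.map (algebraMap R (Localization.AtPrime P)) (⨅ i, q i) :=
      Ideal.mem_map_of_mem _ hx
    rwa [hmap, Ideal.mem_bot] at this
  obtain ⟨s, hs⟩ := IsNoetherian.noetherian (⨅ i, q i : Ideal R)
  have hmem : ∀ x ∈ s, x ∈ (⨅ i, q i : Ideal R) := fun x hx =>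
    hs ▸ Submodule.subset_span hx
  choose t ht using fun (x : {x // x ∈ s}) => key x (hmem x x.2)
  set s' : R := ∏ x : {x // x ∈ s}, (t x : R) with hs'def
  have hs'P : s' ∈ P.primeCompl := Submonoid.prod_mem _ (fun x _ => (t x).2)
  have hs'ann : ∀ x ∈ (⨅ i, q i : Ideal R), s' * x = 0 := by
    intro x hx
    have hx' : x ∈ Submodule.span R (↑s : Set R) := hs.symm ▸ hx
    clear hx
    induction hx' using Submodule.span_induction with
    | mem y hy =>
      obtain ⟨r, hr⟩ := Finset.dvd_prod_of_mem (fun x : {x // x ∈ s} => (t x : R))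
        (Finset.mem_univ (⟨y, hy⟩ : {x // x ∈ s}))
      rw [hs'def, hr, mul_assoc, mul_comm r y, ← mul_assoc, ht ⟨y, hy⟩, zero_mul]
    | zero => rw [mul_zero]
    | add a b _ _ iha ihb => rw [mul_add, iha, ihb, add_zero]
    | smul r a _ iha => rw [smul_eq_mul, ← mul_assoc, mul_comm s' r, mul_assoc, iha, mul_zero]
  have hs'mem : s' ∈ Module.annihilator R ↥(⨅ i, q i : Ideal R) := by
    rw [Module.mem_annihilator]
    rintro ⟨m, hm⟩
    exact Subtype.ext (by simpa [smul_eq_mul] using hs'ann m hm)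
  exact hs'P (hPJ hs'mem)
end
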